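/- Let C ⊆ F_q^n be a code with |C| = q^k ≥ 2 and minimum distance d, and suppose the minimum-distance graph G(C) is connected. Then for every function f : F_q^k → S with |Im(f)| ≥ 2, every bijection u ↦ c_u from F_q^k onto C, and every d_f > d, there exist u, v ∈ F_q^k with f(u) ≠ f(v) and d(c_u, c_v) < d_f; that is, C cannot serve as an (f : d, d_f)-FCC with d_f > d. -/

import Mathlib

/-- The minimum distance of a code `C ⊆ F^n`: the least Hamming distance between distinct
codewords. -/
noncomputable def minDist {F : Type*} [Fintype F] [DecidableEq F] {n : ℕ}
    (C : Set (Fin n → F)) : ℕ :=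
  sInf {d : ℕ | ∃ x ∈ C, ∃ y ∈ C, x ≠ y ∧ hammingDist x y = d}

/-- The minimum-distance graph `G(C)`: vertices are codewords, with distinct codewords adjacent
iff their Hamming distance equals the minimum distance of `C`. -/
noncomputable def mdGraph {F : Type*} [Fintype F] [DecidableEq F] {n : ℕ}
    (C : Set (Fin n → F)) : SimpleGraph C where
  Adj x y := x ≠ y ∧ hammingDist (x : Fin n → F) (y : Fin n → F) = minDist C
  symm := by
    constructor
    rintro x y ⟨hxy, hd⟩
    exact ⟨hxy.symm, by rwa [hammingDist_comm]⟩
  loopless := by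
    constructor
    rintro x ⟨hxx, -⟩
    exact hxx rfl


private lemma exists_adj_ne_of_walk {V S : Type*} {G : SimpleGraph V} {g : V → S}
    {x y : V} (w : G.Walk x y) (h : g x ≠ g y) :
    ∃ a b : V, G.Adj a b ∧ g a ≠ g b := by
  induction w with
  | nil => exact absurd rfl h
  | @cons p q r hadj w ih =>
    by_cases hxz : g p = g q
    · exact ih (hxz ▸ h)
    · exact ⟨p, q, hadj, hxz⟩

/-- If the minimum-distance graph of a code `C` with `|C| = q^k ≥ 2` and
minimum distance `d` is connected, then `C` cannot serve as a strict `(f : d, d_f)`-FCC for any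
`f` with `|Im(f)| ≥ 2` and `d_f > d`. -/
theorem mdGraph_connected_no_strict_FCC
    {F S : Type*} [Field F] [Fintype F] [DecidableEq F]
    {n k d : ℕ} (C : Set (Fin n → F))
    (hcard : Nat.card C = Fintype.card F ^ k) (h2 : 2 ≤ Nat.card C)
    (hmin : minDist C = d) (hconn : (mdGraph C).Connected)
    (f : (Fin k → F) → S) (hf : (Set.range f).Nontrivial)
    (cenc : (Fin k → F) → (Fin n → F)) (hinj : Function.Injective cenc)
    (hsurj : Set.range cenc = C)
    (df : ℕ) (hdf : d < df) :
    ∃ u v : Fin k → F, f u ≠ f v ∧ hammingDist (cenc u) (cenc v) < df := by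
  obtain ⟨a, ⟨u, rfl⟩, b, ⟨v, rfl⟩, hab⟩ := hf
  have hmem : ∀ w : Fin k → F, cenc w ∈ C := fun w => hsurj ▸ ⟨w, rfl⟩
  set g : C → S := fun c => f (Function.invFun cenc (c : Fin n → F)) with hg
  have hgval : ∀ w : Fin k → F, g ⟨cenc w, hmem w⟩ = f w := fun w => by
    simp [hg, Function.leftInverse_invFun hinj w]
  have hne : g ⟨cenc u, hmem u⟩ ≠ g ⟨cenc v, hmem v⟩ := by
    rw [hgval, hgval]; exact hab
  obtain ⟨p, q, hpq, hgpq⟩ :=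
    exists_adj_ne_of_walk ((hconn ⟨cenc u, hmem u⟩ ⟨cenc v, hmem v⟩).some) hne
  obtain ⟨u', hu'⟩ : (p : Fin n → F) ∈ Set.range cenc := hsurj ▸ p.2
  obtain ⟨v', hv'⟩ : (q : Fin n → F) ∈ Set.range cenc := hsurj ▸ q.2
  refine ⟨u', v', ?_, ?_⟩
  · have h1 : g p = f u' := by simp [hg, ← hu', Function.leftInverse_invFun hinj u']
    have h2 : g q = f v' := by simp [hg, ← hv', Function.leftInverse_invFun hinj v']
    rw [← h1, ← h2]; exact hgpq
  · rw [hu', hv', hpq.2, hmin]; exact hdf
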